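/- For every constant c ∈ (0,1) there exists K > 0 such that for every integer k ≥ 1 and every u > 0 satisfying c⁻¹·e^{−π/u} < c, one has 0 ≤ ∫_{c⁻¹·e^{−π/u}}^{c} r^{k−1}·sin²(u·log r) dr ≤ K·u²·cᵏ, with the constant K independent of k and u. (Equation (4.3) of the paper.) -/

import Mathlib

open Real

lemma collar_deriv (m : ℕ) (r : ℝ) (hr : 0 < r) :
    HasDerivAt (fun r : ℝ => r ^ (m + 1) *
      ((Real.log r) ^ 2 / (m + 1) - 2 * Real.log r / (m + 1) ^ 2 + 2 / (m + 1) ^ 3))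
      (r ^ m * (Real.log r) ^ 2) r := by
  have hr0 : r ≠ 0 := ne_of_gt hr
  have hl : HasDerivAt Real.log r⁻¹ r := Real.hasDerivAt_log hr0
  have hp : HasDerivAt (fun r : ℝ => r ^ (m + 1)) ((m + 1 : ℕ) * r ^ m) r := by
    simpa using hasDerivAt_pow (m + 1) r
  have hb : HasDerivAt (fun r : ℝ =>
      (Real.log r) ^ 2 / (m + 1) - 2 * Real.log r / (m + 1) ^ 2 + 2 / (m + 1) ^ 3)
      ((2 * Real.log r ^ 1 * r⁻¹) / (m + 1) - (2 * r⁻¹) / (m + 1) ^ 2) r := by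
    exact (((hl.pow 2).div_const _).sub ((hl.const_mul 2).div_const _)).add_const _
  have := hp.mul hb
  refine this.congr_deriv ?_
  have hm : ((m : ℝ) + 1) ≠ 0 := by positivity
  push_cast
  field_simp
  ring

/-- Equation (4.3): for `k ≥ 1`,
`0 ≤ ∫_{c⁻¹ e^{-π/u}}^{c} r^{k-1} sin²(u log r) dr ≤ K u² cᵏ`
with `K` independent of `k` and `u`. -/
theorem collar_integral_pos_power (c : ℝ) (hc0 : 0 < c) (hc1 : c < 1) :
    ∃ K : ℝ, 0 < K ∧ ∀ k : ℕ, 1 ≤ k → ∀ u : ℝ, 0 < u →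
      c⁻¹ * Real.exp (-(π / u)) < c →
      0 ≤ (∫ r in (c⁻¹ * Real.exp (-(π / u)))..c,
            r ^ (k - 1) * Real.sin (u * Real.log r) ^ 2) ∧
      (∫ r in (c⁻¹ * Real.exp (-(π / u)))..c,
            r ^ (k - 1) * Real.sin (u * Real.log r) ^ 2) ≤ K * u ^ 2 * c ^ k := by
  refine ⟨(Real.log c - 1) ^ 2 + 1, by positivity, ?_⟩
  intro k hk u hu hac
  obtain ⟨m, rfl⟩ : ∃ m, k = m + 1 := ⟨k - 1, (Nat.succ_pred_eq_of_pos hk).symm⟩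
  simp only [Nat.add_sub_cancel]
  set a : ℝ := c⁻¹ * Real.exp (-(π / u)) with ha_def
  have ha0 : 0 < a := by positivity
  have hposIcc : ∀ x ∈ Set.Icc a c, 0 < x := fun x hx => lt_of_lt_of_le ha0 hx.1
  constructor
  · exact intervalIntegral.integral_nonneg hac.le
      (fun x hx => mul_nonneg (pow_nonneg (hposIcc x hx).le m) (sq_nonneg _))
  · -- continuity of the two integrands on [a, c]
    have hlogC : ContinuousOn Real.log (Set.Icc a c) :=
      Real.continuousOn_log.mono (fun x hx => ne_of_gt (hposIcc x hx))
    have hc1' : ContinuousOn (fun r : ℝ => r ^ m * Real.sin (u * Real.log r) ^ 2)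
        (Set.Icc a c) := by
      exact (continuous_pow m).continuousOn.mul
        (((Real.continuous_sin.comp_continuousOn
          (continuousOn_const.mul hlogC))).pow 2)
    have hc2' : ContinuousOn (fun r : ℝ => u ^ 2 * (r ^ m * (Real.log r) ^ 2))
        (Set.Icc a c) := by
      exact continuousOn_const.mul ((continuous_pow m).continuousOn.mul (hlogC.pow 2))
    have hmono : (∫ r in a..c, r ^ m * Real.sin (u * Real.log r) ^ 2)
        ≤ ∫ r in a..c, u ^ 2 * (r ^ m * (Real.log r) ^ 2) := by
      refine intervalIntegral.integral_mono_on hac.le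
        (hc1'.intervalIntegrable_of_Icc hac.le)
        (hc2'.intervalIntegrable_of_Icc hac.le) (fun x hx => ?_)
      have hx0 : 0 < x := hposIcc x hx
      have hs : Real.sin (u * Real.log x) ^ 2 ≤ (u * Real.log x) ^ 2 :=
        Real.sin_sq_le_sq
      have hxm : (0:ℝ) ≤ x ^ m := by positivity
      nlinarith [sq_nonneg (u * Real.log x)]
    -- FTC
    set F : ℝ → ℝ := fun r => r ^ (m + 1) *
      ((Real.log r) ^ 2 / (m + 1) - 2 * Real.log r / (m + 1) ^ 2 + 2 / (m + 1) ^ 3)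
      with hF_def
    have hFTC : (∫ r in a..c, r ^ m * (Real.log r) ^ 2) = F c - F a := by
      refine intervalIntegral.integral_eq_sub_of_hasDerivAt (fun r hr => ?_) ?_
      · refine collar_deriv m r ?_
        rw [Set.uIcc_of_le hac.le] at hr
        exact hposIcc r hr
      · refine ContinuousOn.intervalIntegrable ?_
        rw [Set.uIcc_of_le hac.le]
        exact (continuous_pow m).continuousOn.mul (hlogC.pow 2)
    have hkm : (1:ℝ) ≤ (m:ℝ) + 1 := by
      have : (0:ℝ) ≤ (m:ℝ) := Nat.cast_nonneg m
      linarith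
    have hkm0 : (0:ℝ) < (m:ℝ) + 1 := by linarith
    have hFa : 0 ≤ F a := by
      have hb : (Real.log a) ^ 2 / ((m:ℝ) + 1) - 2 * Real.log a / ((m:ℝ) + 1) ^ 2
          + 2 / ((m:ℝ) + 1) ^ 3
          = ((Real.log a * ((m:ℝ) + 1) - 1) ^ 2 + 1) / ((m:ℝ) + 1) ^ 3 := by
        field_simp
        ring
      have hb2 : 0 ≤ (Real.log a) ^ 2 / ((m:ℝ) + 1) - 2 * Real.log a / ((m:ℝ) + 1) ^ 2
          + 2 / ((m:ℝ) + 1) ^ 3 := by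
        rw [hb]; positivity
      have h0 : (0:ℝ) ≤ a ^ (m+1) := by positivity
      exact mul_nonneg h0 hb2
    have hLc : Real.log c < 0 := Real.log_neg hc0 hc1
    have hFc : F c ≤ ((Real.log c - 1) ^ 2 + 1) * c ^ (m + 1) := by
      have hcp : (0:ℝ) < c ^ (m+1) := by positivity
      have hb : (Real.log c) ^ 2 / ((m:ℝ) + 1) - 2 * Real.log c / ((m:ℝ) + 1) ^ 2
          + 2 / ((m:ℝ) + 1) ^ 3 ≤ (Real.log c - 1) ^ 2 + 1 := by
        have h1 : (Real.log c) ^ 2 / ((m:ℝ) + 1) ≤ (Real.log c) ^ 2 := by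
          rw [div_le_iff₀ hkm0]
          nlinarith [sq_nonneg (Real.log c)]
        have hk2 : (1:ℝ) ≤ ((m:ℝ) + 1) ^ 2 := by nlinarith
        have h2 : -(2 * Real.log c) / ((m:ℝ) + 1) ^ 2 ≤ -(2 * Real.log c) := by
          rw [div_le_iff₀ (by positivity)]
          nlinarith
        have h3 : 2 / ((m:ℝ) + 1) ^ 3 ≤ 2 := by
          rw [div_le_iff₀ (by positivity)]
          nlinarith
        have e : -(2 * Real.log c) / ((m:ℝ) + 1) ^ 2
            = -(2 * Real.log c / ((m:ℝ) + 1) ^ 2) := by ring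
        rw [e] at h2
        have hexp : (Real.log c - 1) ^ 2 + 1
            = Real.log c ^ 2 - 2 * Real.log c + 2 := by ring
        rw [hexp]
        linarith
      calc F c ≤ c ^ (m+1) * ((Real.log c - 1) ^ 2 + 1) := by
            exact mul_le_mul_of_nonneg_left hb hcp.le
        _ = ((Real.log c - 1) ^ 2 + 1) * c ^ (m + 1) := by ring
    have hint2 : (∫ r in a..c, u ^ 2 * (r ^ m * (Real.log r) ^ 2))
        = u ^ 2 * (F c - F a) := by
      rw [intervalIntegral.integral_const_mul, hFTC]
    calc (∫ r in a..c, r ^ m * Real.sin (u * Real.log r) ^ 2)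
        ≤ u ^ 2 * (F c - F a) := by rw [← hint2]; exact hmono
      _ ≤ u ^ 2 * F c := by nlinarith [sq_nonneg u]
      _ ≤ u ^ 2 * (((Real.log c - 1) ^ 2 + 1) * c ^ (m + 1)) := by
          exact mul_le_mul_of_nonneg_left hFc (by positivity)
      _ = ((Real.log c - 1) ^ 2 + 1) * u ^ 2 * c ^ (m + 1) := by ring
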